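/- Let E be a sharply orthocomplete lattice effect algebra. Then E is sharply dominating (hence S-dominating and centrally dominating), and S(E) is a complete orthomodular lattice bifull in E. -/

import Mathlib

universe u v

/-- An effect algebra: a partial algebra `(E; ⊕, 0, 1)` with `0 ≠ 1`, where `⊕` is
partially defined (domain `D`), commutative and associative where defined, every
element has a unique orthosupplement (`compl`, skolemizing axiom (Eiii)), and
`1 ⊕ x` defined implies `x = 0`. -/
structure EffectAlgebra (E : Type u) where
  D : E → E → Prop
  oplus : E → E → E
  zero : E
  one : E
  zero_ne_one : zero ≠ one
  D_comm : ∀ x y, D x y → D y x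
  oplus_comm : ∀ x y, D x y → oplus x y = oplus y x
  assoc : ∀ x y z, D x y → D (oplus x y) z →
      D y z ∧ D x (oplus y z) ∧ oplus (oplus x y) z = oplus x (oplus y z)
  assoc' : ∀ x y z, D y z → D x (oplus y z) →
      D x y ∧ D (oplus x y) z ∧ oplus (oplus x y) z = oplus x (oplus y z)
  compl : E → E
  D_compl : ∀ x, D x (compl x)
  oplus_compl : ∀ x, oplus x (compl x) = one
  compl_unique : ∀ x y, D x y → oplus x y = one → y = compl x
  one_max : ∀ x, D one x → x = zero

namespace EffectAlgebra

variable {E : Type u} (A : EffectAlgebra E)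

/-- The induced order: `x ≤ y` iff `x ⊕ z = y` for some `z`. -/
def le (x y : E) : Prop := ∃ z, A.D x z ∧ A.oplus x z = y

def IsLB (S : Set E) (m : E) : Prop := ∀ x ∈ S, A.le m x
def IsUB (S : Set E) (m : E) : Prop := ∀ x ∈ S, A.le x m

/-- `m` is the infimum of `S` computed within the subposet `P`. -/
def IsInfIn (P : Set E) (S : Set E) (m : E) : Prop :=
  m ∈ P ∧ A.IsLB S m ∧ ∀ z ∈ P, A.IsLB S z → A.le z m

/-- `m` is the supremum of `S` computed within the subposet `P`. -/
def IsSupIn (P : Set E) (S : Set E) (m : E) : Prop :=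
  m ∈ P ∧ A.IsUB S m ∧ ∀ z ∈ P, A.IsUB S z → A.le m z

/-- `w` is sharp iff the meet `w ∧ w'` exists in `E` and equals `0`. -/
def Sharp (w : E) : Prop := A.IsInfIn Set.univ {w, A.compl w} A.zero

/-- The set `S(E)` of sharp elements. -/
def sharpSet : Set E := {w | A.Sharp w}

def HasMeet (x y : E) : Prop := ∃ m, A.IsInfIn Set.univ {x, y} m
def HasJoin (x y : E) : Prop := ∃ j, A.IsSupIn Set.univ {x, y} j

/-- Every `x` has a least sharp element above it, which is the infimum of the sharp
elements above `x` both in `E` and in `S(E)`. -/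
def SharplyDominating : Prop :=
  ∀ x : E, ∃ w, A.Sharp w ∧ A.le x w ∧
    A.IsInfIn Set.univ {v | A.Sharp v ∧ A.le x v} w ∧
    A.IsInfIn A.sharpSet {v | A.Sharp v ∧ A.le x v} w

/-- Sharply dominating, and `x ∧ w` exists for every `x ∈ E`, `w ∈ S(E)`. -/
def SDominating : Prop :=
  A.SharplyDominating ∧ ∀ x w : E, A.Sharp w → A.HasMeet x w

end EffectAlgebra

/-- `SumDef A l s` : the orthosum of the finite list `l` is defined and equals `s`. -/
inductive EffectAlgebra.SumDef {E : Type u} (A : EffectAlgebra E) : List E → E → Prop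
  | nil : EffectAlgebra.SumDef A [] A.zero
  | cons {x : E} {l : List E} {s : E} : EffectAlgebra.SumDef A l s → A.D x s →
      EffectAlgebra.SumDef A (x :: l) (A.oplus x s)

namespace EffectAlgebra

variable {E : Type u} (A : EffectAlgebra E)

/-- A family is orthogonal iff every finite subfamily has a defined orthosum. -/
def Orthogonal {ι : Type v} (x : ι → E) : Prop :=
  ∀ l : List ι, l.Nodup → ∃ s, A.SumDef (l.map x) s

/-- The set of finite partial orthosums of a family. -/
def finiteSums {ι : Type v} (x : ι → E) : Set E :=
  {s | ∃ l : List ι, l.Nodup ∧ A.SumDef (l.map x) s}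

/-- `v = ⊕ x` : the family is orthogonal and `v` is the supremum in `E` of all
finite partial orthosums. -/
def HasOrthoSum {ι : Type v} (x : ι → E) (v : E) : Prop :=
  A.Orthogonal x ∧ A.IsSupIn Set.univ (A.finiteSums x) v

/-- Every family dominated elementwise by an orthogonal family of sharp
elements has an orthosum. -/
def SharplyOrthocomplete : Prop :=
  ∀ (ι : Type u) (x w : ι → E), (∀ k, A.Sharp (w k)) → A.Orthogonal w →
    (∀ k, A.le (x k) (w k)) → ∃ v, A.HasOrthoSum x v

/-- `c` is central: for every `y` the meets `y ∧ c`, `y ∧ c'` exist and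
`y = (y ∧ c) ∨ (y ∧ c')`. -/
def Central (c : E) : Prop :=
  ∀ y : E, ∃ m₁ m₂, A.IsInfIn Set.univ {y, c} m₁ ∧
    A.IsInfIn Set.univ {y, A.compl c} m₂ ∧ A.IsSupIn Set.univ {m₁, m₂} y

/-- The center `C(E)`. -/
def centerSet : Set E := {c | A.Central c}

def CentrallyDominating : Prop :=
  ∀ x : E, ∃ c, A.Central c ∧ A.le x c ∧
    A.IsInfIn Set.univ {d | A.Central d ∧ A.le x d} c ∧
    A.IsInfIn A.centerSet {d | A.Central d ∧ A.le x d} c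

def CentrallyOrthocomplete : Prop :=
  ∀ (ι : Type u) (x c : ι → E), (∀ k, A.Central (c k)) → A.Orthogonal c →
    (∀ k, A.le (x k) (c k)) → ∃ v, A.HasOrthoSum x v

/-- `P` is bifull in `E`: for `S ⊆ P`, the join of `S` in `P` exists iff the join
of `S` in `E` exists, and then they coincide. -/
def Bifull (P : Set E) : Prop :=
  ∀ S ⊆ P, (∀ s, A.IsSupIn P S s → A.IsSupIn Set.univ S s) ∧
    (∀ s, A.IsSupIn Set.univ S s → A.IsSupIn P S s)

/-- The subposet `P` is a complete lattice: every subset of `P` has a supremum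
(and an infimum) computed within `P`. -/
def CompleteIn (P : Set E) : Prop :=
  ∀ S ⊆ P, (∃ s, A.IsSupIn P S s) ∧ (∃ m, A.IsInfIn P S m)

/-- `E` is a complete lattice. -/
def Complete : Prop :=
  ∀ S : Set E, (∃ s, A.IsSupIn Set.univ S s) ∧ (∃ m, A.IsInfIn Set.univ S m)

/-- The induced order of `E` is a lattice. -/
def LatticeOrdered : Prop := ∀ x y : E, A.HasMeet x y ∧ A.HasJoin x y

/-- `x ↔ y` : `x ∨ y = x ⊕ (y ⊖ (x ∧ y))`. -/
def Compatible (x y : E) : Prop :=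
  ∃ m j z, A.IsInfIn Set.univ {x, y} m ∧ A.IsSupIn Set.univ {x, y} j ∧
    A.D m z ∧ A.oplus m z = y ∧ A.D x z ∧ A.oplus x z = j

/-- An MV-effect algebra: a lattice effect algebra all of whose pairs of elements
are compatible. -/
def MV : Prop := A.LatticeOrdered ∧ ∀ x y : E, A.Compatible x y

/-- `nx = x ⊕ ⋯ ⊕ x` (`n` times) is defined. -/
def nTimesDef (n : ℕ) (x : E) : Prop := ∃ s, A.SumDef (List.replicate n x) s

/-- `ord x < ∞` for every nonzero `x`. -/
def IsArchimedean : Prop := ∀ x : E, x ≠ A.zero → ∃ n : ℕ, ¬ A.nTimesDef n x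

def Atom (a : E) : Prop := a ≠ A.zero ∧ ∀ b, A.le b a → b = A.zero ∨ b = a

def Atomic : Prop := ∀ x : E, x ≠ A.zero → ∃ a, A.Atom a ∧ A.le a x

/-- The subposet `P` (closed under `'`) is an orthomodular lattice. -/
def OrthomodularIn (P : Set E) : Prop :=
  (∀ x ∈ P, ∀ y ∈ P, (∃ m, A.IsInfIn P {x, y} m) ∧ (∃ j, A.IsSupIn P {x, y} j)) ∧
  A.zero ∈ P ∧ A.one ∈ P ∧ (∀ x ∈ P, A.compl x ∈ P) ∧
  (∀ x ∈ P, A.IsInfIn P {x, A.compl x} A.zero ∧ A.IsSupIn P {x, A.compl x} A.one) ∧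
  (∀ x ∈ P, ∀ y ∈ P, A.le x y →
    ∃ m, A.IsInfIn P {y, A.compl x} m ∧ A.IsSupIn P {x, m} y)

def DistributiveIn (P : Set E) : Prop :=
  ∀ x ∈ P, ∀ y ∈ P, ∀ z ∈ P, ∀ jyz mxy mxz m : E,
    A.IsSupIn P {y, z} jyz → A.IsInfIn P {x, y} mxy → A.IsInfIn P {x, z} mxz →
    A.IsInfIn P {x, jyz} m → A.IsSupIn P {mxy, mxz} m

/-- The subposet `P` is a Boolean algebra (complemented distributive lattice with
bounds, complement given by `'`). -/
def BooleanIn (P : Set E) : Prop :=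
  (∀ x ∈ P, ∀ y ∈ P, (∃ m, A.IsInfIn P {x, y} m) ∧ (∃ j, A.IsSupIn P {x, y} j)) ∧
  A.zero ∈ P ∧ A.one ∈ P ∧ (∀ x ∈ P, A.compl x ∈ P) ∧
  (∀ x ∈ P, A.IsInfIn P {x, A.compl x} A.zero ∧ A.IsSupIn P {x, A.compl x} A.one) ∧
  A.DistributiveIn P

/-- A block: a maximal set of pairwise compatible elements. -/
def Block (M : Set E) : Prop :=
  (∀ x ∈ M, ∀ y ∈ M, A.Compatible x y) ∧
  ∀ N : Set E, M ⊆ N → (∀ x ∈ N, ∀ y ∈ N, A.Compatible x y) → N = M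

def AtomIn (M : Set E) (a : E) : Prop :=
  a ∈ M ∧ a ≠ A.zero ∧ ∀ b ∈ M, A.le b a → b = A.zero ∨ b = a

def AtomicIn (M : Set E) : Prop :=
  ∀ x ∈ M, x ≠ A.zero → ∃ a, A.AtomIn M a ∧ A.le a x

end EffectAlgebra
namespace EffectAlgebra

section Basics

variable {E : Type u} {A : EffectAlgebra E}

lemma compl_compl_ (x : E) : A.compl (A.compl x) = x := by
  have h := A.compl_unique (A.compl x) x (A.D_comm _ _ (A.D_compl x))
    (by rw [A.oplus_comm _ _ (A.D_comm _ _ (A.D_compl x))]; exact A.oplus_compl x)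
  exact h.symm

lemma compl_inj {x y : E} (h : A.compl x = A.compl y) : x = y := by
  rw [← compl_compl_ (A := A) x, h, compl_compl_]

lemma compl_one_ : A.compl A.one = A.zero :=
  A.one_max _ (A.D_compl A.one)

lemma compl_zero_ : A.compl A.zero = A.one := by
  rw [← compl_one_ (A := A), compl_compl_]

lemma D_oplus_zero (y : E) : A.D y A.zero ∧ A.oplus y A.zero = y := by
  set x := A.compl y with hx
  have hy : y = A.compl x := (compl_compl_ y).symm
  have h1 : A.D x (A.compl x) := A.D_compl x
  have h2 : A.D (A.oplus x (A.compl x)) A.zero := by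
    rw [A.oplus_compl x, ← compl_one_ (A := A)]; exact A.D_compl A.one
  obtain ⟨hD, hD2, he⟩ := A.assoc x (A.compl x) A.zero h1 h2
  have hone : A.oplus x (A.oplus (A.compl x) A.zero) = A.one := by
    rw [← he, A.oplus_compl x, ← compl_one_ (A := A)]
    exact A.oplus_compl A.one
  have := A.compl_unique x _ hD2 hone
  rw [hy]
  exact ⟨hD, this⟩

lemma D_zero (y : E) : A.D y A.zero := (D_oplus_zero y).1

lemma oplus_zero (y : E) : A.oplus y A.zero = y := (D_oplus_zero y).2

lemma zero_oplus (y : E) : A.oplus A.zero y = y := by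
  rw [A.oplus_comm _ _ (A.D_comm _ _ (D_zero y))]; exact oplus_zero y

/-- cancellation -/
lemma cancel {a b c : E} (h1 : A.D a b) (h2 : A.D a c)
    (e : A.oplus a b = A.oplus a c) : b = c := by
  set d := A.compl (A.oplus a b) with hd
  have hDd : A.D (A.oplus a b) d := A.D_compl _
  have h1' : A.oplus (A.oplus a b) d = A.one := A.oplus_compl _
  -- b = compl (d ⊕ a)
  have key : ∀ x : E, A.D a x → A.D (A.oplus a x) d →
      A.oplus (A.oplus a x) d = A.one → x = A.compl (A.oplus d a) := by
    intro x hax hxd hone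
    obtain ⟨hxd', hax', he⟩ := A.assoc a x d hax hxd
    -- a ⊕ (x ⊕ d) = 1
    have e1 : A.oplus a (A.oplus x d) = A.one := by rw [← he]; exact hone
    -- ((x ⊕ d) ⊕ a) = 1
    have hD2 : A.D (A.oplus x d) a := A.D_comm _ _ hax'
    have e2 : A.oplus (A.oplus x d) a = A.one := by
      rw [A.oplus_comm _ _ hD2]; exact e1
    obtain ⟨hxd2, hxd3, he2⟩ := A.assoc x d a hxd' hD2
    -- x ⊕ (d ⊕ a) = 1
    have e3 : A.oplus x (A.oplus d a) = A.one := by rw [← he2]; exact e2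
    have hD4 : A.D (A.oplus d a) x := A.D_comm _ _ hxd3
    have e4 : A.oplus (A.oplus d a) x = A.one := by
      rw [A.oplus_comm _ _ hD4]; exact e3
    exact A.compl_unique _ _ hD4 e4
  have hb := key b h1 hDd h1'
  have hc := key c h2 (by rw [e] at hDd; exact hDd) (by rw [e] at h1'; exact h1')
  rw [hb, hc]

lemma cancel_right {a b c : E} (h1 : A.D b a) (h2 : A.D c a)
    (e : A.oplus b a = A.oplus c a) : b = c := by
  apply cancel (A.D_comm _ _ h1) (A.D_comm _ _ h2)
  rw [A.oplus_comm _ _ (A.D_comm _ _ h1), A.oplus_comm _ _ (A.D_comm _ _ h2)]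
  exact e

lemma le_refl (x : E) : A.le x x := ⟨A.zero, D_zero x, oplus_zero x⟩

lemma zero_le (x : E) : A.le A.zero x :=
  ⟨x, A.D_comm _ _ (D_zero x), zero_oplus x⟩

lemma le_one (x : E) : A.le x A.one := ⟨A.compl x, A.D_compl x, A.oplus_compl x⟩

lemma le_trans {x y z : E} (h1 : A.le x y) (h2 : A.le y z) : A.le x z := by
  obtain ⟨a, ha, rfl⟩ := h1
  obtain ⟨b, hb, rfl⟩ := h2
  obtain ⟨hab, hxab, he⟩ := A.assoc x a b ha hb
  exact ⟨A.oplus a b, hxab, he.symm⟩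

lemma eq_zero_of_oplus_eq_zero {a b : E} (h : A.D a b) (e : A.oplus a b = A.zero) :
    a = A.zero ∧ b = A.zero := by
  have hD1 : A.D (A.oplus a b) A.one := by
    rw [e, ← compl_zero_ (A := A)]; exact A.D_compl A.zero
  obtain ⟨hb1, -, -⟩ := A.assoc a b A.one h hD1
  have hb0 : b = A.zero := A.one_max b (A.D_comm _ _ hb1)
  refine ⟨?_, hb0⟩
  rw [hb0, oplus_zero] at e
  exact e

lemma le_antisymm {x y : E} (h1 : A.le x y) (h2 : A.le y x) : x = y := by
  obtain ⟨a, ha, rfl⟩ := h1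
  obtain ⟨b, hb, he⟩ := h2
  obtain ⟨hab, hxab, he2⟩ := A.assoc x a b ha hb
  have : A.oplus x (A.oplus a b) = A.oplus x A.zero := by
    rw [← he2, he, oplus_zero]
  have h0 := cancel hxab (D_zero x) this
  obtain ⟨ha0, -⟩ := eq_zero_of_oplus_eq_zero hab h0
  rw [ha0, oplus_zero]

lemma le_zero_iff {x : E} : A.le x A.zero ↔ x = A.zero :=
  ⟨fun h => le_antisymm h (zero_le x), fun h => h ▸ le_refl _⟩

lemma compl_antitone {a b : E} (h : A.le a b) : A.le (A.compl b) (A.compl a) := by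
  obtain ⟨d, hd, rfl⟩ := h
  have h1 : A.D (A.oplus a d) (A.compl (A.oplus a d)) := A.D_compl _
  obtain ⟨hdb, hadb, he⟩ := A.assoc a d _ hd h1
  have e1 : A.oplus a (A.oplus d (A.compl (A.oplus a d))) = A.one := by
    rw [← he]; exact A.oplus_compl _
  have : A.oplus d (A.compl (A.oplus a d)) = A.compl a := A.compl_unique _ _ hadb e1
  exact ⟨d, A.D_comm _ _ hdb, by rw [A.oplus_comm _ _ (A.D_comm _ _ hdb)]; exact this⟩

lemma compl_antitone_iff {a b : E} : A.le (A.compl b) (A.compl a) ↔ A.le a b := by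
  constructor
  · intro h
    have := compl_antitone h
    rwa [compl_compl_, compl_compl_] at this
  · exact compl_antitone

lemma le_oplus_left {a b : E} (h : A.D a b) : A.le a (A.oplus a b) := ⟨b, h, rfl⟩

lemma le_oplus_right {a b : E} (h : A.D a b) : A.le b (A.oplus a b) :=
  ⟨a, A.D_comm _ _ h, A.oplus_comm _ _ (A.D_comm _ _ h)⟩

lemma le_compl_of_D {a b : E} (h : A.D a b) : A.le a (A.compl b) := by
  have h1 : A.D (A.oplus b a) (A.compl (A.oplus b a)) := A.D_compl _
  obtain ⟨had, hbad, he⟩ := A.assoc b a _ (A.D_comm _ _ h) h1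
  have e1 : A.oplus b (A.oplus a (A.compl (A.oplus b a))) = A.one := by
    rw [← he]; exact A.oplus_compl _
  have : A.oplus a (A.compl (A.oplus b a)) = A.compl b := A.compl_unique _ _ hbad e1
  exact ⟨_, had, this⟩

lemma D_of_le_compl {a b : E} (h : A.le a (A.compl b)) : A.D a b := by
  obtain ⟨z, hz, he⟩ := h
  have h1 : A.D b (A.oplus a z) := by rw [he]; exact A.D_compl b
  obtain ⟨hba, -, -⟩ := A.assoc' b a z hz h1
  exact A.D_comm _ _ hba

lemma D_iff_le_compl {a b : E} : A.D a b ↔ A.le a (A.compl b) :=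
  ⟨le_compl_of_D, D_of_le_compl⟩

lemma D_mono_left {a b c : E} (hab : A.le a b) (h : A.D b c) : A.D a c :=
  D_of_le_compl (le_trans hab (le_compl_of_D h))

lemma D_mono_right {a b c : E} (hbc : A.le b c) (h : A.D a c) : A.D a b :=
  A.D_comm _ _ (D_mono_left hbc (A.D_comm _ _ h))

lemma oplus_le_oplus_left {a b c : E} (hab : A.le a b) (h : A.D b c) :
    A.le (A.oplus a c) (A.oplus b c) := by
  obtain ⟨d, hd, rfl⟩ := hab
  obtain ⟨hdc, hadc, he⟩ := A.assoc a d c hd h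
  have hacd : A.D a (A.oplus c d) := by
    rw [A.oplus_comm _ _ hdc] at hadc; exact hadc
  obtain ⟨-, hacd2, he2⟩ := A.assoc' a c d (A.D_comm _ _ hdc) hacd
  exact ⟨d, hacd2, by rw [he2, A.oplus_comm _ _ (A.D_comm _ _ hdc), ← he]⟩

lemma oplus_le_oplus_right {a b c : E} (hab : A.le a b) (h : A.D c b) :
    A.le (A.oplus c a) (A.oplus c b) := by
  have h1 := oplus_le_oplus_left (A := A) hab (A.D_comm _ _ h)
  rwa [← A.oplus_comm _ _ (D_mono_right hab h), ← A.oplus_comm _ _ h] at h1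

lemma cancel_le {a b c : E} (ha : A.D a c) (hb : A.D b c)
    (h : A.le (A.oplus a c) (A.oplus b c)) : A.le a b := by
  obtain ⟨d, hd, he⟩ := h
  obtain ⟨hcd, hacd, he2⟩ := A.assoc a c d ha hd
  have hacd' : A.D a (A.oplus d c) := by
    rw [A.oplus_comm _ _ hcd] at hacd; exact hacd
  obtain ⟨had, hadc, he3⟩ := A.assoc' a d c (A.D_comm _ _ hcd) hacd'
  have : A.oplus (A.oplus a d) c = A.oplus b c := by
    rw [he3, ← A.oplus_comm _ _ hcd, ← he2, he]
  exact ⟨d, had, cancel_right hadc hb this⟩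

/-- from m ≤ a, a⊕t = y, m⊕r = y conclude t ≤ r -/
lemma sub_antitone {m a t r y : E} (hma : A.le m a) (hat : A.D a t)
    (Hat : A.oplus a t = y) (hmr : A.D m r) (Hmr : A.oplus m r = y) : A.le t r := by
  obtain ⟨e, hme, rfl⟩ := hma
  obtain ⟨het, hmet, he⟩ := A.assoc m e t hme hat
  have : A.oplus m (A.oplus e t) = A.oplus m r := by rw [← he, Hat, Hmr]
  have hr : r = A.oplus e t := (cancel hmet hmr this).symm
  rw [hr]; exact le_oplus_right het

end Basics

end EffectAlgebra
namespace EffectAlgebra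

section Lattice

variable {E : Type u} {A : EffectAlgebra E}

noncomputable def meet (hL : A.LatticeOrdered) (x y : E) : E := ((hL x y).1).choose

noncomputable def join (hL : A.LatticeOrdered) (x y : E) : E := ((hL x y).2).choose

variable (hL : A.LatticeOrdered)

lemma meet_spec (x y : E) : A.IsInfIn Set.univ {x, y} (meet hL x y) :=
  ((hL x y).1).choose_spec

lemma join_spec (x y : E) : A.IsSupIn Set.univ {x, y} (join hL x y) :=
  ((hL x y).2).choose_spec

lemma meet_le_left (x y : E) : A.le (meet hL x y) x :=
  (meet_spec hL x y).2.1 x (Set.mem_insert _ _)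

lemma meet_le_right (x y : E) : A.le (meet hL x y) y :=
  (meet_spec hL x y).2.1 y (Set.mem_insert_of_mem _ rfl)

lemma le_meet {x y z : E} (h1 : A.le z x) (h2 : A.le z y) : A.le z (meet hL x y) := by
  refine (meet_spec hL x y).2.2 z (Set.mem_univ _) ?_
  intro t ht
  rcases ht with rfl | ht
  · exact h1
  · rw [Set.mem_singleton_iff] at ht; rw [ht]; exact h2

lemma le_join_left (x y : E) : A.le x (join hL x y) :=
  (join_spec hL x y).2.1 x (Set.mem_insert _ _)

lemma le_join_right (x y : E) : A.le y (join hL x y) :=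
  (join_spec hL x y).2.1 y (Set.mem_insert_of_mem _ rfl)

lemma join_le {x y z : E} (h1 : A.le x z) (h2 : A.le y z) : A.le (join hL x y) z := by
  refine (join_spec hL x y).2.2 z (Set.mem_univ _) ?_
  intro t ht
  rcases ht with rfl | ht
  · exact h1
  · rw [Set.mem_singleton_iff] at ht; rw [ht]; exact h2

lemma isInf_unique {S : Set E} {m m' : E} (h1 : A.IsInfIn Set.univ S m)
    (h2 : A.IsInfIn Set.univ S m') : m = m' :=
  le_antisymm (h2.2.2 m (Set.mem_univ _) h1.2.1) (h1.2.2 m' (Set.mem_univ _) h2.2.1)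

lemma isSup_unique {S : Set E} {m m' : E} (h1 : A.IsSupIn Set.univ S m)
    (h2 : A.IsSupIn Set.univ S m') : m = m' :=
  le_antisymm (h1.2.2 m' (Set.mem_univ _) h2.2.1) (h2.2.2 m (Set.mem_univ _) h1.2.1)

lemma meet_eq {x y m : E} (h : A.IsInfIn Set.univ {x, y} m) : meet hL x y = m :=
  isInf_unique (meet_spec hL x y) h

lemma join_eq {x y m : E} (h : A.IsSupIn Set.univ {x, y} m) : join hL x y = m :=
  isSup_unique (join_spec hL x y) h

lemma D_join {x y z : E} (hx : A.D x z) (hy : A.D y z) : A.D (join hL x y) z :=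
  D_of_le_compl (join_le hL (le_compl_of_D hx) (le_compl_of_D hy))

lemma D_meet_left {x y z : E} (hx : A.D x z) : A.D (meet hL x y) z :=
  D_mono_left (meet_le_left hL x y) hx

/-- (x ∨ y) ⊕ z = (x ⊕ z) ∨ (y ⊕ z) -/
lemma oplus_join_distrib {x y z : E} (hx : A.D x z) (hy : A.D y z) :
    A.oplus (join hL x y) z = join hL (A.oplus x z) (A.oplus y z) := by
  have hDj : A.D (join hL x y) z := D_join hL hx hy
  apply le_antisymm
  · -- (join x y)⊕z ≤ join (x⊕z) (y⊕z)
    have hz : A.le z (join hL (A.oplus x z) (A.oplus y z)) :=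
      le_trans (le_oplus_right hx) (le_join_left hL _ _)
    obtain ⟨w, hw, he⟩ := hz
    have hwz : A.D w z := A.D_comm _ _ hw
    have he' : A.oplus w z = join hL (A.oplus x z) (A.oplus y z) := by
      rw [A.oplus_comm _ _ hwz]; exact he
    have hxw : A.le x w := cancel_le hx hwz (by rw [he']; exact le_join_left hL _ _)
    have hyw : A.le y w := cancel_le hy hwz (by rw [he']; exact le_join_right hL _ _)
    have := oplus_le_oplus_left (join_le hL hxw hyw) hwz
    rwa [he'] at this
  · exact join_le hL (oplus_le_oplus_left (le_join_left hL x y) hDj)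
      (oplus_le_oplus_left (le_join_right hL x y) hDj)

/-- (x ∧ y) ⊕ z = (x ⊕ z) ∧ (y ⊕ z) -/
lemma oplus_meet_distrib {x y z : E} (hx : A.D x z) (hy : A.D y z) :
    A.oplus (meet hL x y) z = meet hL (A.oplus x z) (A.oplus y z) := by
  have hDm : A.D (meet hL x y) z := D_meet_left hL hx
  apply le_antisymm
  · exact le_meet hL (oplus_le_oplus_left (meet_le_left hL x y) hx)
      (oplus_le_oplus_left (meet_le_right hL x y) hy)
  · -- meet (x⊕z) (y⊕z) ≤ (meet x y)⊕z
    set u := meet hL (A.oplus x z) (A.oplus y z) with hu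
    have hzx : A.le z (A.oplus x z) := le_oplus_right hx
    have hzy : A.le z (A.oplus y z) := le_oplus_right hy
    have huz : A.le (join hL u z) (A.oplus x z) :=
      join_le hL (meet_le_left hL _ _) hzx
    have huz' : A.le (join hL u z) (A.oplus y z) :=
      join_le hL (meet_le_right hL _ _) hzy
    have hz : A.le z (join hL u z) := le_join_right hL _ _
    obtain ⟨w, hw, he⟩ := hz
    have hwz : A.D w z := A.D_comm _ _ hw
    have he' : A.oplus w z = join hL u z := by rw [A.oplus_comm _ _ hwz]; exact he
    have hwx : A.le w x := cancel_le hwz hx (by rw [he']; exact huz)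
    have hwy : A.le w y := cancel_le hwz hy (by rw [he']; exact huz')
    have h1 : A.le (A.oplus w z) (A.oplus (meet hL x y) z) :=
      oplus_le_oplus_left (le_meet hL hwx hwy) hDm
    rw [he'] at h1
    exact le_trans (le_join_left hL u z) h1

/-- a ⊕ b = (a ∨ b) ⊕ (a ∧ b) -/
lemma oplus_eq_join_oplus_meet {a b : E} (h : A.D a b) :
    A.D (join hL a b) (meet hL a b) ∧
    A.oplus a b = A.oplus (join hL a b) (meet hL a b) := by
  have hab' : A.le a (A.compl b) := le_compl_of_D h
  have hba' : A.le b (A.compl a) := le_compl_of_D (A.D_comm _ _ h)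
  set j := join hL a b with hj
  set m := meet hL a b with hm
  have ham : A.le a (A.compl m) := by
    have := compl_antitone (le_trans (meet_le_right hL a b) hba')
    rwa [compl_compl_] at this
  have hbm : A.le b (A.compl m) := by
    have := compl_antitone (le_trans (meet_le_left hL a b) hab')
    rwa [compl_compl_] at this
  have hDjm : A.D j m := D_of_le_compl (join_le hL ham hbm)
  refine ⟨hDjm, ?_⟩
  have hja : A.le j (A.oplus a b) := join_le hL (le_oplus_left h) (le_oplus_right h)
  obtain ⟨t, hjt, hte⟩ := hja
  have hta : A.le t a := sub_antitone (le_join_right hL a b) hjt hte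
      (A.D_comm _ _ h) (A.oplus_comm _ _ (A.D_comm _ _ h))
  have htb : A.le t b := sub_antitone (le_join_left hL a b) hjt hte h rfl
  have htm : A.le t m := le_meet hL hta htb
  have le1 : A.le (A.oplus a b) (A.oplus j m) := by
    rw [← hte]; exact oplus_le_oplus_right htm hDjm
  -- other direction: find q with m ⊕ q = a ⊕ b, a ≤ q, b ≤ q
  have key : ∀ x y : E, A.D x y → ∃ q, A.D (meet hL x y) q ∧
      A.oplus (meet hL x y) q = A.oplus x y ∧ A.le x q := by
    intro x y hxy
    obtain ⟨r, hmr, her⟩ := meet_le_right hL x y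
    have hxmr : A.D x (A.oplus (meet hL x y) r) := by rw [her]; exact hxy
    obtain ⟨hxm, hxmr2, he2⟩ := A.assoc' x (meet hL x y) r hmr hxmr
    have hmx : A.D (meet hL x y) x := A.D_comm _ _ hxm
    have hmxr : A.D (A.oplus (meet hL x y) x) r := by
      rw [← A.oplus_comm _ _ hxm]; exact hxmr2
    obtain ⟨hxr, hmxr2, he3⟩ := A.assoc (meet hL x y) x r hmx hmxr
    refine ⟨A.oplus x r, hmxr2, ?_, le_oplus_left hxr⟩
    rw [← he3, A.oplus_comm _ _ hmx, he2, her]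
  obtain ⟨q, hmq, heq, haq⟩ := key a b h
  obtain ⟨q', hmq', heq', hbq'⟩ := key b a (A.D_comm _ _ h)
  have hmm : meet hL b a = m := meet_eq hL (by
    have := meet_spec hL a b
    rwa [Set.pair_comm a b] at this)
  rw [hmm] at hmq' heq'
  have hqq : q = q' := cancel hmq hmq' (by
    rw [heq, heq', A.oplus_comm _ _ h])
  have hbq : A.le b q := by rw [hqq]; exact hbq'
  have hjq : A.le j q := join_le hL haq hbq
  have le2 : A.le (A.oplus j m) (A.oplus a b) := by
    have := oplus_le_oplus_left hjq (A.D_comm _ _ hmq)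
    rw [A.oplus_comm _ _ (A.D_comm _ _ hmq), heq] at this
    exact this
  exact le_antisymm le1 le2

lemma oplus_eq_join_of_meet_zero {a b : E} (h : A.D a b)
    (hm : meet hL a b = A.zero) : A.oplus a b = join hL a b := by
  have := (oplus_eq_join_oplus_meet hL h).2
  rwa [hm, oplus_zero] at this

end Lattice

end EffectAlgebra
namespace EffectAlgebra

section SharpLemmas

variable {E : Type u} {A : EffectAlgebra E}

lemma sharp_iff {w : E} :
    A.Sharp w ↔ ∀ z, A.le z w → A.le z (A.compl w) → z = A.zero := by
  constructor
  · intro h z h1 h2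
    refine le_zero_iff.mp (h.2.2 z (Set.mem_univ _) ?_)
    intro t ht
    rcases ht with rfl | ht
    · exact h1
    · rw [Set.mem_singleton_iff] at ht; rw [ht]; exact h2
  · intro H
    refine ⟨Set.mem_univ _, fun t _ => zero_le t, fun z _ hz => ?_⟩
    exact le_zero_iff.mpr
      (H z (hz w (Set.mem_insert _ _)) (hz (A.compl w) (Set.mem_insert_of_mem _ rfl)))

lemma sharp_zero : A.Sharp A.zero :=
  sharp_iff.mpr fun z h1 _ => le_zero_iff.mp h1

lemma sharp_one : A.Sharp A.one :=
  sharp_iff.mpr fun z _ h2 => le_zero_iff.mp (by rwa [compl_one_] at h2)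

lemma sharp_compl {w : E} (h : A.Sharp w) : A.Sharp (A.compl w) :=
  sharp_iff.mpr fun z h1 h2 =>
    sharp_iff.mp h z (by rwa [compl_compl_] at h2) h1

lemma meet_eq_zero_of_sharp (hL : A.LatticeOrdered) {w z1 z2 : E} (hw : A.Sharp w) (h1 : A.le z1 w)
    (h2 : A.le z2 (A.compl w)) : meet hL z1 z2 = A.zero :=
  sharp_iff.mp hw _ (le_trans (meet_le_left hL _ _) h1)
    (le_trans (meet_le_right hL _ _) h2)

/-- an existing supremum of sharp elements is sharp -/
lemma sup_sharp (hL : A.LatticeOrdered) {S : Set E} {j : E} (hS : ∀ a ∈ S, A.Sharp a)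
    (hj : A.IsSupIn Set.univ S j) : A.Sharp j := by
  rw [sharp_iff]
  intro u hu1 hu2
  obtain ⟨t, hut, hute⟩ := hu1
  have htu : A.D t u := A.D_comm _ _ hut
  have hj_eq : A.oplus t u = j := by rw [A.oplus_comm _ _ htu]; exact hute
  have hat : ∀ a ∈ S, A.le a t := by
    intro a ha
    have haj : A.le a j := hj.2.1 a ha
    have hua : A.le u (A.compl a) := le_trans hu2 (compl_antitone haj)
    have hDau : A.D a u := A.D_comm _ _ (D_of_le_compl hua)
    have hmz : meet hL a u = A.zero := sharp_iff.mp (hS a ha) _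
      (meet_le_left hL a u) (le_trans (meet_le_right hL a u) hua)
    have hsum : A.oplus a u = join hL a u := oplus_eq_join_of_meet_zero hL hDau hmz
    have hle : A.le (A.oplus a u) (A.oplus t u) := by
      rw [hsum, hj_eq]
      exact join_le hL haj (hute ▸ le_oplus_left hut)
    exact cancel_le hDau htu hle
  have hjt : A.le j t := hj.2.2 t (Set.mem_univ _) hat
  have htj : A.le t j := by rw [← hj_eq]; exact le_oplus_left htu
  have : t = j := le_antisymm htj hjt
  have : A.oplus t u = A.oplus t A.zero := by rw [hj_eq, oplus_zero, this]
  exact cancel htu (D_zero t) this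

lemma join_sharp (hL : A.LatticeOrdered) {a b : E} (ha : A.Sharp a) (hb : A.Sharp b) :
    A.Sharp (join hL a b) := by
  refine sup_sharp hL ?_ (join_spec hL a b)
  intro t ht
  rcases ht with rfl | ht
  · exact ha
  · rw [Set.mem_singleton_iff] at ht; rw [ht]; exact hb

lemma isInf_compl_of_isSup {S : Set E} {j : E} (h : A.IsSupIn Set.univ S j) :
    A.IsInfIn Set.univ (A.compl '' S) (A.compl j) := by
  refine ⟨Set.mem_univ _, ?_, ?_⟩
  · rintro t ⟨s, hs, rfl⟩
    exact compl_antitone (h.2.1 s hs)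
  · intro z _ hz
    have : ∀ s ∈ S, A.le s (A.compl z) := by
      intro s hs
      have h2 := compl_antitone (hz (A.compl s) ⟨s, hs, rfl⟩)
      rwa [compl_compl_] at h2
    have hjz : A.le j (A.compl z) := h.2.2 _ (Set.mem_univ _) this
    have := compl_antitone hjz
    rwa [compl_compl_] at this

lemma isSup_compl_of_isInf {S : Set E} {m : E} (h : A.IsInfIn Set.univ S m) :
    A.IsSupIn Set.univ (A.compl '' S) (A.compl m) := by
  refine ⟨Set.mem_univ _, ?_, ?_⟩
  · rintro t ⟨s, hs, rfl⟩
    exact compl_antitone (h.2.1 s hs)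
  · intro z _ hz
    have : ∀ s ∈ S, A.le (A.compl z) s := by
      intro s hs
      have := hz (A.compl s) ⟨s, hs, rfl⟩
      have := compl_antitone this
      rwa [compl_compl_] at this
    have hmz : A.le (A.compl z) m := h.2.2 _ (Set.mem_univ _) this
    have h3 := compl_antitone hmz
    rwa [compl_compl_] at h3

lemma compl_meet_eq (hL : A.LatticeOrdered) {a b : E} :
    A.compl (meet hL a b) = join hL (A.compl a) (A.compl b) := by
  have h := isInf_compl_of_isSup (join_spec hL (A.compl a) (A.compl b))
  have himg : A.compl '' ({A.compl a, A.compl b} : Set E) = {a, b} := by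
    rw [Set.image_pair, compl_compl_, compl_compl_]
  rw [himg] at h
  have := meet_eq hL h
  rw [this, compl_compl_]

lemma meet_sharp (hL : A.LatticeOrdered) {a b : E} (ha : A.Sharp a) (hb : A.Sharp b) :
    A.Sharp (meet hL a b) := by
  have h : meet hL a b = A.compl (join hL (A.compl a) (A.compl b)) := by
    rw [← compl_meet_eq hL, compl_compl_]
  rw [h]
  exact sharp_compl (join_sharp hL (sharp_compl ha) (sharp_compl hb))

/-- for sharp w ≤ y : w ⊕ (y ∧ w') = y and w ∨ (y ∧ w') = y -/
lemma sharp_le_decomp (hL : A.LatticeOrdered) {w y : E} (hw : A.Sharp w) (h : A.le w y) :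
    A.D w (meet hL y (A.compl w)) ∧
    A.oplus w (meet hL y (A.compl w)) = y ∧
    join hL w (meet hL y (A.compl w)) = y := by
  obtain ⟨t, hwt, rfl⟩ := h
  set m := meet hL (A.oplus w t) (A.compl w) with hm
  have htc : A.le t (A.compl w) := le_compl_of_D (A.D_comm _ _ hwt)
  have htm : A.le t m := le_meet hL (le_oplus_right hwt) htc
  have hDwm : A.D w m := A.D_comm _ _ (D_of_le_compl (meet_le_right hL _ _))
  have hmz : meet hL w m = A.zero := sharp_iff.mp hw _ (meet_le_left hL w m)
    (le_trans (meet_le_right hL w m) (meet_le_right hL _ _))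
  have hjoin : A.oplus w m = join hL w m := oplus_eq_join_of_meet_zero hL hDwm hmz
  have hle : A.le (A.oplus w m) (A.oplus w t) := by
    rw [hjoin]
    exact join_le hL (le_oplus_left hwt) (meet_le_left hL _ _)
  have hmt : A.le m t := by
    refine cancel_le (A.D_comm _ _ hDwm) (A.D_comm _ _ hwt) ?_
    rwa [A.oplus_comm _ _ (A.D_comm _ _ hDwm), A.oplus_comm _ _ (A.D_comm _ _ hwt)]
  have hmteq : m = t := le_antisymm hmt htm
  refine ⟨hDwm, by rw [hmteq], by rw [← hjoin, hmteq]⟩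

end SharpLemmas

end EffectAlgebra
namespace EffectAlgebra

section Sums

variable {E : Type u} {A : EffectAlgebra E}

lemma sum_unique {l : List E} {s s' : E} (h : A.SumDef l s) (h' : A.SumDef l s') :
    s = s' := by
  induction h generalizing s' with
  | nil => cases h'; rfl
  | cons h1 h2 ih =>
    cases h' with
    | cons h1' h2' => rw [ih h1']

lemma sum_perm {l l' : List E} (hp : l.Perm l') {s : E} (h : A.SumDef l s) :
    A.SumDef l' s := by
  induction hp generalizing s with
  | nil => exact h
  | cons x _ ih =>
    cases h with
    | cons h1 h2 => exact (ih h1).cons h2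
  | swap x y l =>
    cases h with
    | cons h1 h2 =>
      cases h1 with
      | @cons _ _ s₀ h3 h4 =>
        obtain ⟨hyx, hyxs, he⟩ := A.assoc' y x s₀ h4 h2
        have hxy : A.D x y := A.D_comm _ _ hyx
        have hxys : A.D (A.oplus x y) s₀ := by
          rw [← A.oplus_comm _ _ hyx]; exact hyxs
        obtain ⟨hys, hxys2, he2⟩ := A.assoc x y s₀ hxy hxys
        have heq : A.oplus y (A.oplus x s₀) = A.oplus x (A.oplus y s₀) := by
          rw [← he, A.oplus_comm _ _ hyx, he2]
        rw [heq]
        exact SumDef.cons (SumDef.cons h3 hys) hxys2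
  | trans _ _ ih1 ih2 => exact ih2 (ih1 h)

lemma sum_sharp (hL : A.LatticeOrdered) {l : List E} {s : E} (h : A.SumDef l s)
    (hsh : ∀ x ∈ l, A.Sharp x) : A.Sharp s := by
  induction h with
  | nil => exact sharp_zero
  | @cons x l' s₀ h1 h2 ih =>
    have hx : A.Sharp x := hsh x (List.mem_cons_self)
    have hs₀ : A.Sharp s₀ := ih fun y hy => hsh y (List.mem_cons_of_mem _ hy)
    have hs₀c : A.le s₀ (A.compl x) := le_compl_of_D (A.D_comm _ _ h2)
    have hmz : meet hL x s₀ = A.zero := sharp_iff.mp hx _ (meet_le_left hL _ _)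
      (le_trans (meet_le_right hL _ _) hs₀c)
    rw [oplus_eq_join_of_meet_zero hL h2 hmz]
    exact join_sharp hL hx hs₀

lemma exists_subtype_list {O : Set E} (l : List E) (h : ∀ x ∈ l, x ∈ O) :
    ∃ lι : List ↥O, lι.map Subtype.val = l := by
  induction l with
  | nil => exact ⟨[], rfl⟩
  | cons x xs ih =>
    obtain ⟨lι, hlι⟩ := ih fun y hy => h y (List.mem_cons_of_mem _ hy)
    exact ⟨⟨x, h x (List.mem_cons_self)⟩ :: lι, by simp [hlι]⟩

lemma chain_bound {c : Set (Set E)} (hc : IsChain (· ⊆ ·) c) (hne : c.Nonempty)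
    (l : List E) (h : ∀ x ∈ l, ∃ O ∈ c, x ∈ O) : ∃ O ∈ c, ∀ x ∈ l, x ∈ O := by
  induction l with
  | nil => exact ⟨hne.choose, hne.choose_spec, by simp⟩
  | cons x xs ih =>
    obtain ⟨O₁, hO₁c, hO₁⟩ := h x (List.mem_cons_self)
    obtain ⟨O₂, hO₂c, hO₂⟩ := ih fun y hy => h y (List.mem_cons_of_mem _ hy)
    obtain ⟨O₃, hO₃c, h13, h23⟩ := hc.directedOn O₁ hO₁c O₂ hO₂c
    exact ⟨O₃, hO₃c, fun y hy => by
      rcases List.mem_cons.mp hy with rfl | hy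
      · exact h13 hO₁
      · exact h23 (hO₂ y hy)⟩

/-- KEY: every subset of the sharp elements has a supremum in `E`, which is sharp. -/
theorem exists_sharp_sup (hL : A.LatticeOrdered) (hSO : A.SharplyOrthocomplete)
    (S : Set E) (hS : S ⊆ A.sharpSet) :
    ∃ j, A.Sharp j ∧ A.IsSupIn Set.univ S j := by
  classical
  set Good : Set (Set E) := {O | (∀ x ∈ O, A.Sharp x) ∧
    ∀ l : List E, l.Nodup → (∀ x ∈ l, x ∈ O) →
      ∃ s, A.SumDef l s ∧ ∀ u, A.IsUB S u → A.le s u} with hGood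
  have hempty : (∅ : Set E) ∈ Good := by
    constructor
    · intro x hx; exact absurd hx (Set.notMem_empty x)
    · intro l _ hl
      cases l with
      | nil => exact ⟨A.zero, SumDef.nil, fun u _ => zero_le u⟩
      | cons x xs => exact absurd (hl x (List.mem_cons_self)) (Set.notMem_empty x)
  obtain ⟨O, hOmax⟩ := zorn_subset Good (by
    intro c hcG hchain
    rcases c.eq_empty_or_nonempty with rfl | hne
    · exact ⟨∅, hempty, by simp⟩
    · refine ⟨⋃₀ c, ⟨?_, ?_⟩, fun s hs => Set.subset_sUnion_of_mem hs⟩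
      · rintro x ⟨O, hOc, hxO⟩
        exact (hcG hOc).1 x hxO
      · intro l hln hl
        obtain ⟨O, hOc, hO⟩ := chain_bound hchain hne l hl
        exact (hcG hOc).2 l hln hO)
  obtain ⟨⟨hOsharp, hOsum⟩, hOmax'⟩ := hOmax
  -- apply sharp orthocompleteness to the family of elements of O
  have horth : A.Orthogonal (fun k : ↥O => (k : E)) := by
    intro lι hlι
    have hmap : (lι.map Subtype.val).Nodup := hlι.map Subtype.val_injective
    have hmem : ∀ x ∈ lι.map Subtype.val, x ∈ O := by
      intro x hx
      obtain ⟨k, _, rfl⟩ := List.mem_map.mp hx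
      exact k.2
    obtain ⟨s, hs, -⟩ := hOsum _ hmap hmem
    exact ⟨s, hs⟩
  obtain ⟨v, -, hvsup⟩ := hSO ↥O (fun k => (k : E)) (fun k => (k : E))
    (fun k => hOsharp _ k.2) horth (fun k => le_refl _)
  -- facts about v
  have hfs : ∀ s ∈ A.finiteSums (fun k : ↥O => (k : E)), ∃ l : List E,
      l.Nodup ∧ (∀ x ∈ l, x ∈ O) ∧ A.SumDef l s := by
    rintro s ⟨lι, hlι, hsum⟩
    refine ⟨lι.map Subtype.val, hlι.map Subtype.val_injective, ?_, hsum⟩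
    intro x hx
    obtain ⟨k, _, rfl⟩ := List.mem_map.mp hx
    exact k.2
  have hf1 : ∀ s ∈ A.finiteSums (fun k : ↥O => (k : E)), A.Sharp s := by
    intro s hs
    obtain ⟨l, hln, hlO, hsum⟩ := hfs s hs
    exact sum_sharp hL hsum fun x hx => hOsharp x (hlO x hx)
  have hvsharp : A.Sharp v := sup_sharp hL hf1 hvsup
  have hf4 : ∀ u, A.IsUB S u → ∀ s ∈ A.finiteSums (fun k : ↥O => (k : E)), A.le s u := by
    intro u hu s hs
    obtain ⟨l, hln, hlO, hsum⟩ := hfs s hs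
    obtain ⟨s', hsum', hbd⟩ := hOsum l hln hlO
    rw [sum_unique hsum hsum']
    exact hbd u hu
  have hf5 : ∀ u, A.IsUB S u → A.le v u := fun u hu =>
    hvsup.2.2 u (Set.mem_univ _) (hf4 u hu)
  have hf6 : ∀ x ∈ O, A.le x v := by
    intro x hx
    have : A.SumDef [x] (A.oplus x A.zero) := SumDef.cons SumDef.nil (D_zero x)
    rw [oplus_zero] at this
    refine hvsup.2.1 x ⟨[⟨x, hx⟩], List.nodup_singleton _, ?_⟩
    simpa using this
  -- v is an upper bound of S
  have hUB : A.IsUB S v := by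
    intro t ht
    by_contra hnt
    have htsharp : A.Sharp t := hS ht
    set d := meet hL (join hL t v) (A.compl v) with hd
    have hdsharp : A.Sharp d := meet_sharp hL (join_sharp hL htsharp hvsharp)
      (sharp_compl hvsharp)
    obtain ⟨hDvd, hvd, hjvd⟩ := sharp_le_decomp hL hvsharp (le_join_right hL t v)
    have hdne : d ≠ A.zero := by
      intro h0
      rw [hd] at h0
      rw [h0, oplus_zero] at hvd
      exact hnt (hvd ▸ le_join_left hL t v)
    have hdO : d ∉ O := by
      intro hmem
      exact hdne (sharp_iff.mp hvsharp d (hf6 d hmem) (meet_le_right hL _ _))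
    have hGood' : insert d O ∈ Good := by
      constructor
      · intro x hx
        rcases hx with rfl | hx
        · exact hdsharp
        · exact hOsharp x hx
      · intro l hln hl
        by_cases hdl : d ∈ l
        · have hperm := List.perm_cons_erase hdl
          have hlen : (l.erase d).Nodup := hln.erase d
          have hlem : ∀ x ∈ l.erase d, x ∈ O := by
            intro x hx
            have hxl := (List.Nodup.mem_erase_iff hln).mp hx
            rcases hl x hxl.2 with rfl | hxO
            · exact absurd rfl hxl.1
            · exact hxO
          obtain ⟨s₀, hs₀, hbd₀⟩ := hOsum _ hlen hlem
          have hs₀v : A.le s₀ v := by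
            obtain ⟨lι, hlι⟩ := exists_subtype_list _ hlem
            refine hvsup.2.1 s₀ ⟨lι, ?_, by rw [hlι]; exact hs₀⟩
            exact List.Nodup.of_map Subtype.val (hlι ▸ hlen)
          have hds₀ : A.D d s₀ :=
            D_of_le_compl (le_trans (meet_le_right hL _ _) (compl_antitone hs₀v))
          have hsum : A.SumDef l (A.oplus d s₀) :=
            sum_perm hperm.symm (SumDef.cons hs₀ hds₀)
          refine ⟨A.oplus d s₀, hsum, ?_⟩
          intro u hu
          have hmz : meet hL d s₀ = A.zero := sharp_iff.mp hvsharp _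
            (le_trans (meet_le_right hL _ _) hs₀v)
            (le_trans (meet_le_left hL _ _) (meet_le_right hL _ _))
          rw [oplus_eq_join_of_meet_zero hL hds₀ hmz]
          have hdu : A.le d u := le_trans (meet_le_left hL _ _)
            (join_le hL (hu t ht) (hf5 u hu))
          exact join_le hL hdu (hbd₀ u hu)
        · have hlO : ∀ x ∈ l, x ∈ O := by
            intro x hx
            rcases hl x hx with rfl | hxO
            · exact absurd hx hdl
            · exact hxO
          exact hOsum l hln hlO
    have := hOmax' hGood' (Set.subset_insert d O)
    exact hdO (this (Set.mem_insert d O))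
  exact ⟨v, hvsharp, Set.mem_univ _, hUB, fun z _ hz => hf5 z hz⟩

end Sums

end EffectAlgebra
namespace EffectAlgebra

section Central

variable {E : Type u} {A : EffectAlgebra E}

lemma isInf_pair_intro {a b m : E} (h1 : A.le m a) (h2 : A.le m b)
    (h3 : ∀ z, A.le z a → A.le z b → A.le z m) :
    A.IsInfIn Set.univ {a, b} m := by
  refine ⟨Set.mem_univ _, ?_, ?_⟩
  · intro t ht
    rcases ht with rfl | ht
    · exact h1
    · rw [Set.mem_singleton_iff] at ht; rw [ht]; exact h2
  · intro z _ hz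
    exact h3 z (hz a (Set.mem_insert _ _)) (hz b (Set.mem_insert_of_mem _ rfl))

lemma isSup_pair_intro {a b m : E} (h1 : A.le a m) (h2 : A.le b m)
    (h3 : ∀ z, A.le a z → A.le b z → A.le m z) :
    A.IsSupIn Set.univ {a, b} m := by
  refine ⟨Set.mem_univ _, ?_, ?_⟩
  · intro t ht
    rcases ht with rfl | ht
    · exact h1
    · rw [Set.mem_singleton_iff] at ht; rw [ht]; exact h2
  · intro z _ hz
    exact h3 z (hz a (Set.mem_insert _ _)) (hz b (Set.mem_insert_of_mem _ rfl))

lemma central_one : A.Central A.one := by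
  intro y
  refine ⟨y, A.zero, ?_, ?_, ?_⟩
  · exact isInf_pair_intro (le_refl y) (le_one y) fun z h1 _ => h1
  · refine isInf_pair_intro (zero_le y) (zero_le _) fun z _ h2 => ?_
    rwa [compl_one_] at h2
  · exact isSup_pair_intro (le_refl y) (zero_le y) fun z h1 _ => h1

lemma central_compl {c : E} (h : A.Central c) : A.Central (A.compl c) := by
  intro y
  obtain ⟨m₁, m₂, hm₁, hm₂, hsup⟩ := h y
  refine ⟨m₂, m₁, hm₂, ?_, ?_⟩
  · rwa [compl_compl_]
  · rwa [Set.pair_comm]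

lemma central_sharp (hL : A.LatticeOrdered) {c : E} (h : A.Central c) : A.Sharp c := by
  obtain ⟨m₁, m₂, hm₁, hm₂, hsup⟩ := h A.one
  have h₁ : m₁ = c := by
    refine isInf_unique hm₁ (isInf_pair_intro (le_one c) (le_refl c) fun z _ h2 => h2)
  have h₂ : m₂ = A.compl c := by
    refine isInf_unique hm₂
      (isInf_pair_intro (le_one _) (le_refl _) fun z _ h2 => h2)
  rw [h₁, h₂] at hsup
  have hjoin : join hL c (A.compl c) = A.one := join_eq hL hsup
  obtain ⟨hDjm, he⟩ := oplus_eq_join_oplus_meet hL (A.D_compl c)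
  rw [hjoin] at hDjm
  have hmz : meet hL c (A.compl c) = A.zero := A.one_max _ hDjm
  exact sharp_iff.mpr fun z h1 h2 => le_zero_iff.mp (hmz ▸ le_meet hL h1 h2)

lemma central_decomp (hL : A.LatticeOrdered) {c : E} (h : A.Central c) (y : E) :
    A.D (meet hL y c) (meet hL y (A.compl c)) ∧
    A.oplus (meet hL y c) (meet hL y (A.compl c)) = y := by
  obtain ⟨m₁, m₂, hm₁, hm₂, hsup⟩ := h y
  have h₁ : meet hL y c = m₁ := meet_eq hL hm₁
  have h₂ : meet hL y (A.compl c) = m₂ := meet_eq hL hm₂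
  rw [h₁, h₂]
  have hD : A.D m₁ m₂ := by
    refine D_of_le_compl (le_trans (h₁ ▸ meet_le_right hL y c) ?_)
    have := compl_antitone (h₂ ▸ meet_le_right hL y (A.compl c))
    rwa [compl_compl_] at this
  have hmz : meet hL m₁ m₂ = A.zero :=
    sharp_iff.mp (central_sharp hL h) _
      (le_trans (meet_le_left hL _ _) (h₁ ▸ meet_le_right hL y c))
      (le_trans (meet_le_right hL _ _) (h₂ ▸ meet_le_right hL y (A.compl c)))
  refine ⟨hD, ?_⟩
  rw [oplus_eq_join_of_meet_zero hL hD hmz]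
  exact join_eq hL hsup

/-- an existing supremum of central elements is central -/
lemma central_sup (hL : A.LatticeOrdered) {S : Set E} (hc : ∀ c ∈ S, A.Central c)
    {j : E} (hj : A.IsSupIn Set.univ S j) : A.Central j := by
  have hjsharp : A.Sharp j := sup_sharp hL (fun c hc' => central_sharp hL (hc c hc')) hj
  intro y
  set a := meet hL y j with ha
  set b := meet hL y (A.compl j) with hb
  obtain ⟨t, hDat, hate⟩ := meet_le_left hL y j
  -- t ≤ compl c for each c ∈ S
  have htc : ∀ c ∈ S, A.le t (meet hL y (A.compl c)) := by
    intro c hc'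
    obtain ⟨hD12, he12⟩ := central_decomp hL (hc c hc') y
    have hm₁a : A.le (meet hL y c) a := le_meet hL (meet_le_left hL y c)
      (le_trans (meet_le_right hL y c) (hj.2.1 c hc'))
    exact sub_antitone hm₁a hDat hate hD12 he12
  have hty : A.le t y := by rw [← hate]; exact le_oplus_right hDat
  have htj : A.le t (A.compl j) := by
    have hSc : ∀ c ∈ S, A.le c (A.compl t) := by
      intro c hc'
      have := compl_antitone (le_trans (htc c hc') (meet_le_right hL y (A.compl c)))
      rwa [compl_compl_] at this
    have := compl_antitone (hj.2.2 _ (Set.mem_univ _) hSc)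
    rwa [compl_compl_] at this
  have htb : A.le t b := le_meet hL hty htj
  have hDab : A.D a b := by
    have h2 := compl_antitone (meet_le_right hL y (A.compl j))
    rw [compl_compl_] at h2
    exact D_of_le_compl (le_trans (meet_le_right hL y j) h2)
  have hmab : meet hL a b = A.zero := sharp_iff.mp hjsharp _
    (le_trans (meet_le_left hL a b) (meet_le_right hL y j))
    (le_trans (meet_le_right hL a b) (meet_le_right hL y (A.compl j)))
  have haby : A.le (A.oplus a b) y := by
    rw [oplus_eq_join_of_meet_zero hL hDab hmab]
    exact join_le hL (meet_le_left hL y j) (meet_le_left hL y (A.compl j))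
  have hbt : A.le b t := by
    refine cancel_le (A.D_comm _ _ hDab) (A.D_comm _ _ hDat) ?_
    rw [A.oplus_comm _ _ (A.D_comm _ _ hDab), A.oplus_comm _ _ (A.D_comm _ _ hDat), hate]
    exact haby
  have htb' : t = b := le_antisymm htb hbt
  have hy : A.oplus a b = y := by rw [← htb', hate]
  refine ⟨a, b, meet_spec hL y j, meet_spec hL y (A.compl j), ?_⟩
  have hjoin : join hL a b = y := by
    rw [← oplus_eq_join_of_meet_zero hL hDab hmab, hy]
  exact hjoin ▸ join_spec hL a b

end Central

end EffectAlgebra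
namespace EffectAlgebra

section Final

variable {E : Type u} {A : EffectAlgebra E}

lemma isInf_restrict {P S : Set E} {m : E} (h : A.IsInfIn Set.univ S m) (hm : m ∈ P) :
    A.IsInfIn P S m :=
  ⟨hm, h.2.1, fun z _ hz => h.2.2 z (Set.mem_univ _) hz⟩

lemma isSup_restrict {P S : Set E} {m : E} (h : A.IsSupIn Set.univ S m) (hm : m ∈ P) :
    A.IsSupIn P S m :=
  ⟨hm, h.2.1, fun z _ hz => h.2.2 z (Set.mem_univ _) hz⟩

lemma compl_image_twice (S : Set E) : A.compl '' (A.compl '' S) = S := by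
  rw [Set.image_image]
  simp only [compl_compl_, Set.image_id']

lemma sharplyDominating_of (hL : A.LatticeOrdered) (hSO : A.SharplyOrthocomplete) :
    A.SharplyDominating := by
  intro x
  set Sx : Set E := {v | A.Sharp v ∧ A.le x v} with hSx
  have hCs : A.compl '' Sx ⊆ A.sharpSet := by
    rintro t ⟨v, ⟨hv, -⟩, rfl⟩
    exact sharp_compl hv
  obtain ⟨j, hjs, hjsup⟩ := exists_sharp_sup hL hSO _ hCs
  set w := A.compl j with hw
  have hws : A.Sharp w := sharp_compl hjs
  have hxw : A.le x w := by
    have hub : A.IsUB (A.compl '' Sx) (A.compl x) := by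
      rintro t ⟨v, ⟨-, hxv⟩, rfl⟩
      exact compl_antitone hxv
    have := compl_antitone (hjsup.2.2 _ (Set.mem_univ _) hub)
    rwa [compl_compl_] at this
  have hinf : A.IsInfIn Set.univ Sx w := by
    have := isInf_compl_of_isSup hjsup
    rwa [compl_image_twice] at this
  exact ⟨w, hws, hxw, hinf, isInf_restrict hinf hws⟩

lemma centrallyDominating_of (hL : A.LatticeOrdered) (hSO : A.SharplyOrthocomplete) :
    A.CentrallyDominating := by
  intro x
  set Cx : Set E := {d | A.Central d ∧ A.le x d} with hCx
  have hCc : ∀ t ∈ A.compl '' Cx, A.Central t := by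
    rintro t ⟨d, ⟨hd, -⟩, rfl⟩
    exact central_compl hd
  obtain ⟨j, hjs, hjsup⟩ := exists_sharp_sup hL hSO (A.compl '' Cx)
    (fun t ht => central_sharp hL (hCc t ht))
  have hjc : A.Central j := central_sup hL hCc hjsup
  set c := A.compl j with hc
  have hcc : A.Central c := central_compl hjc
  have hxc : A.le x c := by
    have hub : A.IsUB (A.compl '' Cx) (A.compl x) := by
      rintro t ⟨v, ⟨-, hxv⟩, rfl⟩
      exact compl_antitone hxv
    have := compl_antitone (hjsup.2.2 _ (Set.mem_univ _) hub)
    rwa [compl_compl_] at this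
  have hinf : A.IsInfIn Set.univ Cx c := by
    have := isInf_compl_of_isSup hjsup
    rwa [compl_image_twice] at this
  exact ⟨c, hcc, hxc, hinf, isInf_restrict hinf hcc⟩

lemma completeIn_of (hL : A.LatticeOrdered) (hSO : A.SharplyOrthocomplete) :
    A.CompleteIn A.sharpSet := by
  intro S hS
  constructor
  · obtain ⟨j, hjs, hjsup⟩ := exists_sharp_sup hL hSO S hS
    exact ⟨j, isSup_restrict hjsup hjs⟩
  · have hCs : A.compl '' S ⊆ A.sharpSet := by
      rintro t ⟨v, hv, rfl⟩
      exact sharp_compl (hS hv)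
    obtain ⟨j, hjs, hjsup⟩ := exists_sharp_sup hL hSO _ hCs
    have hinf : A.IsInfIn Set.univ S (A.compl j) := by
      have := isInf_compl_of_isSup hjsup
      rwa [compl_image_twice] at this
    exact ⟨A.compl j, isInf_restrict hinf (sharp_compl hjs)⟩

lemma orthomodularIn_of (hL : A.LatticeOrdered) (hSO : A.SharplyOrthocomplete) :
    A.OrthomodularIn A.sharpSet := by
  refine ⟨?_, sharp_zero, sharp_one, fun x hx => sharp_compl hx, ?_, ?_⟩
  · intro x hx y hy
    exact ⟨⟨meet hL x y, isInf_restrict (meet_spec hL x y) (meet_sharp hL hx hy)⟩,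
      ⟨join hL x y, isSup_restrict (join_spec hL x y) (join_sharp hL hx hy)⟩⟩
  · intro x hx
    constructor
    · exact isInf_restrict hx sharp_zero
    · refine ⟨sharp_one, ?_, ?_⟩
      · intro t ht
        rcases ht with rfl | ht
        · exact le_one t
        · rw [Set.mem_singleton_iff] at ht; rw [ht]; exact le_one _
      · intro z hz huz
        have h1 : A.le x z := huz x (Set.mem_insert _ _)
        have h2 : A.le (A.compl x) z := huz (A.compl x) (Set.mem_insert_of_mem _ rfl)
        have h1' : A.le (A.compl z) (A.compl x) := compl_antitone h1
        have h2' : A.le (A.compl z) x := by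
          have := compl_antitone h2
          rwa [compl_compl_] at this
        have hz0 : A.compl z = A.zero := sharp_iff.mp hx _ h2' h1'
        have : z = A.one := by
          rw [← compl_compl_ (A := A) z, hz0, compl_zero_]
        rw [this]
        exact le_refl _
  · intro x hx y hy hxy
    obtain ⟨hD, hsum, hjoin⟩ := sharp_le_decomp hL hx hxy
    refine ⟨meet hL y (A.compl x), isInf_restrict (meet_spec hL y (A.compl x))
      (meet_sharp hL hy (sharp_compl hx)), ?_⟩
    have h2 := join_spec hL x (meet hL y (A.compl x))
    rw [hjoin] at h2
    exact isSup_restrict h2 hy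

lemma bifull_of (hL : A.LatticeOrdered) (hSO : A.SharplyOrthocomplete) :
    A.Bifull A.sharpSet := by
  intro S hS
  obtain ⟨j, hjs, hjsup⟩ := exists_sharp_sup hL hSO S hS
  constructor
  · intro s hs
    have hsj : s = j := le_antisymm (hs.2.2 j hjs hjsup.2.1)
      (hjsup.2.2 s (Set.mem_univ _) hs.2.1)
    rw [hsj]
    exact hjsup
  · intro s hs
    have hsj : s = j := isSup_unique hs hjsup
    rw [hsj]
    exact isSup_restrict hjsup hjs

end Final

end EffectAlgebra

/-- A sharply orthocomplete lattice effect algebra is sharply dominating (hence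
S-dominating and centrally dominating) and `S(E)` is a complete orthomodular
lattice bifull in `E`. -/
theorem stmt17 {E : Type u} (A : EffectAlgebra E) (hL : A.LatticeOrdered)
    (hSO : A.SharplyOrthocomplete) :
    A.SharplyDominating ∧ A.SDominating ∧ A.CentrallyDominating ∧
      A.CompleteIn A.sharpSet ∧ A.OrthomodularIn A.sharpSet ∧
      A.Bifull A.sharpSet := by
  refine ⟨EffectAlgebra.sharplyDominating_of hL hSO,
    ⟨EffectAlgebra.sharplyDominating_of hL hSO, fun x w _ => (hL x w).1⟩,
    EffectAlgebra.centrallyDominating_of hL hSO,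
    EffectAlgebra.completeIn_of hL hSO,
    EffectAlgebra.orthomodularIn_of hL hSO,
    EffectAlgebra.bifull_of hL hSO⟩
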